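/- Let $(L,\lambda)$ be a purely atomic probability space (with atoms indexed by a countable set) such that $\sum_{\ell\in L} -\lambda(\ell)\log\lambda(\ell) = \infty$. Then $L$ can be partitioned into finite sets $(I_n)_{n\in\mathbb{N}}$ such that $\sum_{\ell\in I_n} -\lambda(\ell)\log\lambda(\ell) > c + \log 2$ for every $n$, for any fixed $c > 0$; moreover, for the partitions $\mathcal{L}_n = \{L\setminus I_n\}\cup\{\{\ell\}:\ell\in I_n\}$ one has $H(\mathcal{L}_n \mid \bigvee_{k\neq n}\mathcal{L}_k) = H(\mathcal{L}_n) - H(\{I_n, L\setminus I_n\}) > c$. -/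

import Mathlib

open MeasureTheory Real
open scoped ENNReal symmDiff

variable {L : Type*}

/-- Shannon entropy (in `[0,∞]`) of a countable partition given as a labeling. -/
noncomputable def ent {ι : Type*} [MeasurableSpace L] [Countable ι]
    (ν : Measure L) (p : L → ι) : ℝ≥0∞ :=
  ∑' i : ι, ENNReal.ofReal (negMulLog (ν (p ⁻¹' {i})).toReal)

/-- Real-valued Shannon entropy. -/
noncomputable def entR {ι : Type*} [MeasurableSpace L] [Countable ι]
    (ν : Measure L) (p : L → ι) : ℝ := (ent ν p).toReal

/-- Conditional Shannon entropy `H(p | F)` of a countable partition relative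
to a sub-σ-algebra `F`. -/
noncomputable def condEntSig {ι : Type*} [m0 : MeasurableSpace L] [Countable ι]
    (ν : Measure L) (F : MeasurableSpace L) (p : L → ι) : ℝ :=
  ∑' i : ι, ∫ x in p ⁻¹' {i},
    -Real.log ((ν[Set.indicator (p ⁻¹' {i}) (fun _ => (1:ℝ)) | F]) x) ∂ν

lemma cuts_exist (f : ℕ → ℝ) (hf : ∀ k, 0 ≤ f k) (hns : ¬ Summable f) {b : ℝ} (hb : 0 ≤ b) :
    ∃ t : ℕ → ℕ, t 0 = 0 ∧ StrictMono t ∧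
      ∀ n, b < ∑ k ∈ Finset.Ico (t n) (t (n+1)), f k := by
  have htend : Filter.Tendsto (fun m => ∑ k ∈ Finset.range m, f k) Filter.atTop Filter.atTop :=
    (not_summable_iff_tendsto_nat_atTop_of_nonneg hf).1 hns
  have key : ∀ m : ℕ, ∃ M : ℕ, m < M ∧ b < ∑ k ∈ Finset.Ico m M, f k := by
    intro m
    obtain ⟨M₀, hM₀⟩ := Filter.eventually_atTop.1
      (Filter.tendsto_atTop.1 htend (∑ k ∈ Finset.range m, f k + b + 1))
    refine ⟨max (m+1) M₀, lt_of_lt_of_le (Nat.lt_succ_self m) (le_max_left _ _), ?_⟩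
    have h1 : m ≤ max (m+1) M₀ := le_trans (Nat.le_succ m) (le_max_left _ _)
    have h2 := hM₀ (max (m+1) M₀) (le_max_right _ _)
    rw [Finset.sum_Ico_eq_sub _ h1]
    linarith
  choose step hstep1 hstep2 using key
  refine ⟨fun n => step^[n] 0, rfl, strictMono_nat_of_lt_succ (fun n => ?_), fun n => ?_⟩
  · rw [Function.iterate_succ_apply']; exact hstep1 _
  · simp only [Function.iterate_succ_apply']; exact hstep2 _

lemma findGreatest_eq_iff_cut {t : ℕ → ℕ} (ht0 : t 0 = 0) (htm : StrictMono t) (k n : ℕ) :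
    Nat.findGreatest (fun m => t m ≤ k) k = n ↔ (t n ≤ k ∧ k < t (n+1)) := by
  constructor
  · rintro rfl
    set g := Nat.findGreatest (fun m => t m ≤ k) k with hg
    have h1 : t g ≤ k := Nat.findGreatest_spec (P := fun m => t m ≤ k) (Nat.zero_le k) (by simp [ht0])
    refine ⟨h1, ?_⟩
    by_contra h
    push_neg at h
    have h2 : g + 1 ≤ k := le_trans htm.le_apply h
    have := Nat.le_findGreatest (P := fun m => t m ≤ k) h2 h
    omega
  · rintro ⟨h1, h2⟩
    have hle : n ≤ Nat.findGreatest (fun m => t m ≤ k) k :=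
      Nat.le_findGreatest (P := fun m => t m ≤ k) (le_trans htm.le_apply h1) h1
    have hge : Nat.findGreatest (fun m => t m ≤ k) k ≤ n := by
      by_contra h
      push_neg at h
      have h3 : t (n+1) ≤ t (Nat.findGreatest (fun m => t m ≤ k) k) := htm.monotone h
      have h4 : t (Nat.findGreatest (fun m => t m ≤ k) k) ≤ k :=
        Nat.findGreatest_spec (P := fun m => t m ≤ k) (Nat.zero_le k) (by simp [ht0])
      omega
    omega

lemma exists_I {L : Type*} (e : ℕ ≃ L) (g : L → ℝ) (hg : ∀ ℓ, 0 ≤ g ℓ)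
    (hns : ¬ Summable (fun k => g (e k))) {b : ℝ} (hb : 0 ≤ b) :
    ∃ I : L → ℕ, (∀ n, (I ⁻¹' {n}).Finite) ∧
      ∀ n, b < ∑' ℓ : (I ⁻¹' {n} : Set L), g ℓ := by
  obtain ⟨t, ht0, htm, htsum⟩ := cuts_exist (fun k => g (e k)) (fun k => hg _) hns hb
  refine ⟨fun x => Nat.findGreatest (fun m => t m ≤ e.symm x) (e.symm x), ?_, ?_⟩
  all_goals
    have hfib : ∀ n, ((fun x => Nat.findGreatest (fun m => t m ≤ e.symm x) (e.symm x)) ⁻¹' {n}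
        : Set L) = e '' (Set.Ico (t n) (t (n+1))) := by
      intro n
      ext x
      simp only [Set.mem_preimage, Set.mem_singleton_iff, Set.mem_image, Set.mem_Ico]
      rw [findGreatest_eq_iff_cut ht0 htm]
      constructor
      · rintro ⟨h1, h2⟩; exact ⟨e.symm x, ⟨h1, h2⟩, e.apply_symm_apply x⟩
      · rintro ⟨k, hk, rfl⟩; simpa using hk
  · intro n; rw [hfib n]; exact (Set.finite_Ico _ _).image _
  · intro n
    rw [hfib n]
    have h1 : ∑' ℓ : (e '' (Set.Ico (t n) (t (n+1))) : Set L), g ℓ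
        = ∑' k : (Set.Ico (t n) (t (n+1)) : Set ℕ), g (e k) :=
      ((Equiv.image e _).tsum_eq (fun ℓ : (e '' (Set.Ico (t n) (t (n+1))) : Set L) => g ℓ)).symm
    rw [h1, ← Finset.coe_Ico,
      Finset.tsum_subtype' (Finset.Ico (t n) (t (n+1))) (fun k => g (e k))]
    exact htsum n

lemma negMulLog_le_log_two {x : ℝ} (hx : 0 ≤ x) : negMulLog x ≤ Real.log 2 := by
  have hlog2 : (0.6931471803 : ℝ) < Real.log 2 := Real.log_two_gt_d9
  rcases eq_or_lt_of_le hx with h0 | hxpos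
  · simp [← h0, Real.negMulLog_zero]; linarith
  rcases le_or_gt 1 x with h1 | h1
  · have : 0 ≤ x * Real.log x := mul_nonneg (by linarith) (Real.log_nonneg h1)
    have : negMulLog x ≤ 0 := by rw [Real.negMulLog]; linarith
    linarith
  · -- 0 < x < 1 : negMulLog x = x * log x⁻¹ ≤ x * (x⁻¹/e) = 1/e ≤ 1/2 < log 2
    have he : (0:ℝ) < Real.exp 1 := Real.exp_pos 1
    have hxi : (0:ℝ) < x⁻¹ := inv_pos.2 hxpos
    have hlogle : Real.log x⁻¹ ≤ x⁻¹ / Real.exp 1 := by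
      have h := Real.log_le_sub_one_of_pos (show (0:ℝ) < x⁻¹ / Real.exp 1 by positivity)
      rw [Real.log_div (ne_of_gt hxi) (ne_of_gt he), Real.log_exp] at h
      linarith
    have : negMulLog x ≤ x * (x⁻¹ / Real.exp 1) := by
      have : negMulLog x = x * Real.log x⁻¹ := by
        rw [Real.negMulLog, Real.log_inv]; ring
      rw [this]
      exact mul_le_mul_of_nonneg_left hlogle (le_of_lt hxpos)
    have hxx : x * (x⁻¹ / Real.exp 1) = 1 / Real.exp 1 := by
      field_simp
    have he2 : (2:ℝ) < Real.exp 1 := lt_trans (by norm_num) Real.exp_one_gt_d9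
    have : (1:ℝ) / Real.exp 1 ≤ 1 / 2 := by
      apply div_le_div_of_nonneg_left (by norm_num) (by norm_num) (le_of_lt he2)
    linarith [‹negMulLog x ≤ x * (x⁻¹ / Real.exp 1)›]

open Classical in
lemma key [Countable L] [m0 : MeasurableSpace L] [MeasurableSingletonClass L]
    (ν : Measure L) [IsProbabilityMeasure ν] (I : L → ℕ) (n : ℕ)
    (hfin : (I ⁻¹' {n}).Finite) (hνA : ν (I ⁻¹' {n}) ≠ 0) :
    condEntSig ν
        (MeasurableSpace.generateFrom
          {S : Set L | ∃ k : ℕ, k ≠ n ∧ ∃ j : Option L,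
            S = (fun x => if I x = k then some x else none) ⁻¹' {j}})
        (fun x => if I x = n then some x else none)
      = entR ν (fun x => if I x = n then some x else none) - entR ν (fun x => I x = n)
    ∧ condEntSig ν
        (MeasurableSpace.generateFrom
          {S : Set L | ∃ k : ℕ, k ≠ n ∧ ∃ j : Option L,
            S = (fun x => if I x = k then some x else none) ⁻¹' {j}})
        (fun x => if I x = n then some x else none)
      = ∑ ℓ ∈ hfin.toFinset, negMulLog (ν {ℓ}).toReal
          - negMulLog (ν (I ⁻¹' {n})).toReal := by
  have hmeas : ∀ s : Set L, MeasurableSet[m0] s := fun s => (Set.to_countable s).measurableSet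
  have hsum_meas : ∑ ℓ ∈ hfin.toFinset, (ν {ℓ}).toReal = (ν (I ⁻¹' {n})).toReal := by
    have hU : ⋃ ℓ ∈ hfin.toFinset, ({ℓ} : Set L) = I ⁻¹' {n} := by
      ext x
      simp [hfin.mem_toFinset]
    have h1 : ν (⋃ ℓ ∈ hfin.toFinset, ({ℓ} : Set L)) = ∑ ℓ ∈ hfin.toFinset, ν {ℓ} :=
      measure_biUnion_finset
        (fun a _ b _ hab => Set.disjoint_singleton.2 hab)
        (fun b _ => hmeas {b})
    rw [hU] at h1
    rw [h1, ENNReal.toReal_sum fun a _ => measure_ne_top ν {a}]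
  set A := I ⁻¹' {n} with hA
  set p : L → Option L := fun x => if I x = n then some x else none with hp
  set G : Set (Set L) := {S : Set L | ∃ k : ℕ, k ≠ n ∧ ∃ j : Option L,
      S = (fun x => if I x = k then some x else none) ⁻¹' {j}} with hG
  -- preimage computations
  have hpre_none : p ⁻¹' {(none : Option L)} = Aᶜ := by
    ext x
    simp only [hp, Set.mem_preimage, Set.mem_singleton_iff, Set.mem_compl_iff, hA]
    split_ifs with h <;> simp [h]
  have hpre_some : ∀ ℓ : L, I ℓ = n → p ⁻¹' {some ℓ} = {ℓ} := by
    intro ℓ hℓ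
    ext x
    simp only [hp, Set.mem_preimage, Set.mem_singleton_iff]
    constructor
    · intro h
      by_cases hx : I x = n
      · rw [if_pos hx, Option.some_inj] at h; exact h
      · rw [if_neg hx] at h; exact absurd h (by simp)
    · rintro rfl; rw [if_pos hℓ]
  have hpre_some' : ∀ ℓ : L, I ℓ ≠ n → p ⁻¹' {some ℓ} = ∅ := by
    intro ℓ hℓ
    ext x
    simp only [hp, Set.mem_preimage, Set.mem_singleton_iff, Set.mem_empty_iff_false, iff_false]
    intro h
    by_cases hx : I x = n
    · rw [if_pos hx, Option.some_inj] at h; exact hℓ (h ▸ hx)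
    · rw [if_neg hx] at h; exact absurd h (by simp)
  -- subsets of Aᶜ are F-measurable
  have hAc_mem : ∀ S : Set L, S ⊆ Aᶜ → MeasurableSet[MeasurableSpace.generateFrom G] S := by
    intro S hS
    have hU : S = ⋃ x : S, {(x : L)} := by simp
    rw [hU]
    refine MeasurableSet.iUnion fun x => ?_
    have hx : I (x : L) ≠ n := hS x.2
    refine MeasurableSpace.measurableSet_generateFrom ⟨I (x : L), hx, some (x : L), ?_⟩
    ext y
    simp only [Set.mem_singleton_iff, Set.mem_preimage]
    constructor
    · rintro rfl; rw [if_pos rfl]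
    · intro h
      by_cases hy : I y = I (x : L)
      · rw [if_pos hy, Option.some_inj] at h; exact h
      · rw [if_neg hy] at h; exact absurd h (by simp)
  have hA_F : MeasurableSet[MeasurableSpace.generateFrom G] A := by
    have := (hAc_mem Aᶜ subset_rfl).compl
    rwa [compl_compl] at this
  have hAc_F : MeasurableSet[MeasurableSpace.generateFrom G] Aᶜ := hA_F.compl
  have hFle : MeasurableSpace.generateFrom G ≤ m0 := MeasurableSpace.generateFrom_le fun t _ => hmeas t
  haveI : SigmaFinite (ν.trim hFle) := by infer_instance
  -- dichotomy
  have hdich : ∀ S : Set L, MeasurableSet[MeasurableSpace.generateFrom G] S → S ∩ A = ∅ ∨ A ⊆ S := by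
    intro S hS
    induction S, hS using MeasurableSpace.generateFrom_induction with
    | hC t ht _ =>
      obtain ⟨k, hk, j, rfl⟩ := ht
      cases j with
      | none =>
        right
        intro x hx
        simp only [Set.mem_preimage, Set.mem_singleton_iff]
        rw [if_neg]
        intro h
        exact hk (h ▸ hx.symm ▸ rfl)
      | some ℓ =>
        left
        ext x
        simp only [Set.mem_inter_iff, Set.mem_preimage, Set.mem_singleton_iff,
          Set.mem_empty_iff_false, iff_false, not_and]
        intro hx hxA
        have hxn : I x = n := hxA
        by_cases h : I x = k
        · exact hk (hxn ▸ h.symm)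
        · rw [if_neg h] at hx; exact absurd hx (by simp)
    | empty => left; simp
    | compl t _ ih =>
      rcases ih with h | h
      · right
        intro x hx
        simp only [Set.mem_compl_iff]
        intro hxt
        exact Set.eq_empty_iff_forall_notMem.1 h x ⟨hxt, hx⟩
      · left
        ext x
        simp only [Set.mem_inter_iff, Set.mem_compl_iff, Set.mem_empty_iff_false, iff_false,
          not_and]
        intro hxt hxA
        exact hxt (h hxA)
    | iUnion s _ ih =>
      by_cases hex : ∃ i, A ⊆ s i
      · obtain ⟨i, hi⟩ := hex
        right; exact hi.trans (Set.subset_iUnion s i)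
      · push_neg at hex
        left
        have h0 : ∀ i, s i ∩ A = ∅ := fun i => (ih i).resolve_right (hex i)
        rw [Set.iUnion_inter]
        simp [h0]
  -- basic facts
  have hAtop : ν A ≠ ⊤ := measure_ne_top ν A
  have hAtR : 0 < (ν A).toReal := ENNReal.toReal_pos hνA hAtop
  set r : L → ℝ := fun ℓ => (ν {ℓ}).toReal / (ν A).toReal with hr
  -- conditional expectation over singleton pieces
  have hce : ∀ ℓ : L, ℓ ∈ A →
      (ν[Set.indicator (p ⁻¹' {some ℓ}) (fun _ => (1:ℝ)) | MeasurableSpace.generateFrom G]) =ᵐ[ν]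
        A.indicator (fun _ => r ℓ) := by
    intro ℓ hℓ
    have hℓn : I ℓ = n := hℓ
    rw [hpre_some ℓ hℓn]
    refine (ae_eq_condExp_of_forall_setIntegral_eq hFle ?_ ?_ ?_ ?_).symm
    · exact (integrable_const (1:ℝ)).indicator (hmeas {ℓ})
    · intro s _ _
      exact ((integrable_const (r ℓ)).indicator (hmeas A)).integrableOn
    · intro s hs _
      rw [setIntegral_indicator (hmeas A), setIntegral_indicator (hmeas {ℓ}),
        setIntegral_const, setIntegral_const]
      rcases hdich s hs with h | h
      · have h2 : s ∩ {ℓ} = ∅ := by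
          apply Set.eq_empty_of_subset_empty
          rw [← h]
          exact Set.inter_subset_inter_right s (by simpa using hℓ)
        rw [h, h2]
        simp
      · rw [Set.inter_eq_right.2 h, Set.inter_eq_right.2 (Set.singleton_subset_iff.2 (h hℓ))]
        simp only [smul_eq_mul, mul_one, hr]
        field_simp
        rw [measureReal_def, measureReal_def]
    · exact StronglyMeasurable.aestronglyMeasurable (stronglyMeasurable_const.indicator hA_F)
  -- conditional expectation over the complement
  have hce0 : (ν[Set.indicator (p ⁻¹' {(none : Option L)}) (fun _ => (1:ℝ)) | MeasurableSpace.generateFrom G])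
      = Set.indicator (p ⁻¹' {(none : Option L)}) (fun _ => (1:ℝ)) := by
    refine condExp_of_stronglyMeasurable hFle ?_ ?_
    · exact stronglyMeasurable_const.indicator (hpre_none ▸ hAc_F)
    · exact (integrable_const (1:ℝ)).indicator (hmeas _)
  -- the integral terms
  set T : Option L → ℝ := fun j => ∫ x in p ⁻¹' {j},
      -Real.log ((ν[Set.indicator (p ⁻¹' {j}) (fun _ => (1:ℝ)) | MeasurableSpace.generateFrom G]) x) ∂ν with hT
  have hT_none : T none = 0 := by
    rw [hT]
    simp only
    rw [hce0]
    rw [setIntegral_congr_fun (hmeas _)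
      (g := fun _ => (0:ℝ)) (fun x hx => by simp [Set.indicator_of_mem hx])]
    simp
  have hT_some' : ∀ ℓ : L, I ℓ ≠ n → T (some ℓ) = 0 := by
    intro ℓ hℓ
    rw [hT]
    simp only
    rw [hpre_some' ℓ hℓ]
    simp
  have hT_someA : ∀ ℓ : L, ℓ ∈ A → T (some ℓ) = (ν {ℓ}).toReal * (-Real.log (r ℓ)) := by
    intro ℓ hℓ
    have hℓn : I ℓ = n := hℓ
    have h2 : (fun x => -Real.log ((ν[Set.indicator (p ⁻¹' {some ℓ}) (fun _ => (1:ℝ)) | MeasurableSpace.generateFrom G]) x))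
        =ᵐ[ν] (fun x => -Real.log (A.indicator (fun _ => r ℓ) x)) :=
      (hce ℓ hℓ).mono fun x hx => by dsimp only; rw [hx]
    have h3 : T (some ℓ) = ∫ x in p ⁻¹' {some ℓ}, -Real.log (A.indicator (fun _ => r ℓ) x) ∂ν :=
      integral_congr_ae (ae_restrict_of_ae h2)
    rw [h3, hpre_some ℓ hℓn, integral_singleton, Set.indicator_of_mem hℓ, smul_eq_mul, measureReal_def]
  -- condEntSig as a finite sum
  have hinj : ∀ a ∈ hfin.toFinset, ∀ b ∈ hfin.toFinset, (some a : Option L) = some b → a = b :=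
    fun a _ b _ h => Option.some_inj.1 h
  have hcondEnt : condEntSig ν (MeasurableSpace.generateFrom G) p
      = ∑ ℓ ∈ hfin.toFinset, (ν {ℓ}).toReal * (-Real.log (r ℓ)) := by
    have h0 : condEntSig ν (MeasurableSpace.generateFrom G) p = ∑' j, T j := rfl
    rw [h0, tsum_eq_sum (s := hfin.toFinset.image some) ?_, Finset.sum_image hinj]
    · exact Finset.sum_congr rfl fun ℓ hℓ => hT_someA ℓ (hfin.mem_toFinset.1 hℓ)
    · intro j hj
      cases j with
      | none => exact hT_none
      | some ℓ =>
        refine hT_some' ℓ fun hc => ?_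
        exact hj (Finset.mem_image_of_mem some (hfin.mem_toFinset.2 hc))
  -- nonnegativity of entropy terms
  have hnn : ∀ s : Set L, 0 ≤ negMulLog (ν s).toReal := by
    intro s
    refine Real.negMulLog_nonneg ENNReal.toReal_nonneg ?_
    have h1 : ν s ≤ 1 := prob_le_one
    have := ENNReal.toReal_mono (by simp) h1
    simpa using this
  -- entropy of p
  have hentp : ent ν p = ENNReal.ofReal (negMulLog (ν Aᶜ).toReal)
      + ∑ ℓ ∈ hfin.toFinset, ENNReal.ofReal (negMulLog (ν {ℓ}).toReal) := by
    have h0 : ent ν p = ∑' j : Option L, ENNReal.ofReal (negMulLog (ν (p ⁻¹' {j})).toReal) := rfl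
    rw [h0, tsum_eq_sum (s := insert none (hfin.toFinset.image some)) ?_,
      Finset.sum_insert (by simp), Finset.sum_image hinj, hpre_none]
    · refine congrArg _ (Finset.sum_congr rfl fun ℓ hℓ => ?_)
      rw [hpre_some ℓ (hfin.mem_toFinset.1 hℓ)]
    · intro j hj
      simp only [Finset.mem_insert, Finset.mem_image, not_or, not_exists] at hj
      cases j with
      | none => exact absurd rfl hj.1
      | some ℓ =>
        have hℓ : I ℓ ≠ n := by
          intro hc
          exact (hj.2 ℓ) ⟨hfin.mem_toFinset.2 hc, rfl⟩
        rw [hpre_some' ℓ hℓ]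
        simp [Real.negMulLog_zero]
  have hentRp : entR ν p = negMulLog (ν Aᶜ).toReal
      + ∑ ℓ ∈ hfin.toFinset, negMulLog (ν {ℓ}).toReal := by
    rw [entR, hentp, ENNReal.toReal_add ENNReal.ofReal_ne_top
        (ENNReal.sum_lt_top.2 fun a _ => ENNReal.ofReal_lt_top).ne,
      ENNReal.toReal_ofReal (hnn _), ENNReal.toReal_sum fun a _ => ENNReal.ofReal_ne_top]
    refine congrArg _ (Finset.sum_congr rfl fun ℓ _ => ?_)
    exact ENNReal.toReal_ofReal (hnn _)
  -- entropy of the two-set partition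
  have hqT : (fun x => I x = n) ⁻¹' {True} = A := by
    ext x
    simp only [Set.mem_preimage, Set.mem_singleton_iff, hA, Set.mem_preimage,
      Set.mem_singleton_iff, eq_iff_iff, iff_true]
  have hqF : (fun x => I x = n) ⁻¹' {False} = Aᶜ := by
    ext x
    simp only [Set.mem_preimage, Set.mem_singleton_iff, hA, Set.mem_compl_iff,
      Set.mem_preimage, Set.mem_singleton_iff, eq_iff_iff, iff_false]
  have hentq : ent ν (fun x => I x = n) = ENNReal.ofReal (negMulLog (ν A).toReal)
      + ENNReal.ofReal (negMulLog (ν Aᶜ).toReal) := by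
    have h0 : ent ν (fun x => I x = n)
        = ∑' i : Prop, ENNReal.ofReal (negMulLog (ν ((fun x => I x = n) ⁻¹' {i})).toReal) := rfl
    rw [h0, tsum_fintype, Fintype.univ_Prop,
      Finset.sum_pair (by simp : (True : Prop) ≠ False), hqT, hqF]
  have hentRq : entR ν (fun x => I x = n)
      = negMulLog (ν A).toReal + negMulLog (ν Aᶜ).toReal := by
    rw [entR, hentq, ENNReal.toReal_add ENNReal.ofReal_ne_top ENNReal.ofReal_ne_top,
      ENNReal.toReal_ofReal (hnn _), ENNReal.toReal_ofReal (hnn _)]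
  -- the main computation
  have hmain : condEntSig ν (MeasurableSpace.generateFrom G) p
      = ∑ ℓ ∈ hfin.toFinset, negMulLog (ν {ℓ}).toReal - negMulLog (ν A).toReal := by
    rw [hcondEnt]
    have hterm : ∀ ℓ ∈ hfin.toFinset, (ν {ℓ}).toReal * (-Real.log (r ℓ))
        = negMulLog (ν {ℓ}).toReal + (ν {ℓ}).toReal * Real.log (ν A).toReal := by
      intro ℓ _
      rcases eq_or_ne (ν {ℓ}).toReal 0 with h0 | h0
      · rw [hr]
        simp [h0, Real.negMulLog_zero]
      · rw [hr]
        dsimp only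
        rw [Real.log_div h0 (ne_of_gt hAtR), Real.negMulLog]
        ring
    rw [Finset.sum_congr rfl hterm, Finset.sum_add_distrib, ← Finset.sum_mul, hsum_meas,
      Real.negMulLog]
    ring
  refine ⟨?_, hmain⟩
  rw [hmain, hentRp, hentRq]
  ring

open Classical in
/-- Let `(L, ν)` be a purely atomic probability space (atoms indexed by a
countable set) with `∑_ℓ -ν(ℓ) log ν(ℓ) = ∞`, and let `c > 0`.  Then `L` can
be partitioned into finite sets `Iₙ` with
`∑_{ℓ ∈ Iₙ} -ν(ℓ) log ν(ℓ) > c + log 2` for all `n`; moreover, for the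
partitions `𝓛ₙ = {L \ Iₙ} ∪ {{ℓ} : ℓ ∈ Iₙ}` one has
`H(𝓛ₙ | ⋁_{k ≠ n} 𝓛ₖ) = H(𝓛ₙ) - H({Iₙ, L \ Iₙ}) > c`. -/
theorem stmt10 [Countable L] [MeasurableSpace L] [MeasurableSingletonClass L]
    (ν : Measure L) [IsProbabilityMeasure ν]
    (hinf : ∑' ℓ : L, ENNReal.ofReal (negMulLog (ν {ℓ}).toReal) = ⊤)
    (c : ℝ) (hc : 0 < c) :
    ∃ I : L → ℕ,
      (∀ n, (I ⁻¹' {n}).Finite) ∧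
      (∀ n, c + Real.log 2 < ∑' ℓ : (I ⁻¹' {n} : Set L), negMulLog (ν {(ℓ : L)}).toReal) ∧
      (∀ n : ℕ,
        condEntSig ν
          (MeasurableSpace.generateFrom
            {S : Set L | ∃ k : ℕ, k ≠ n ∧ ∃ j : Option L,
              S = (fun x => if I x = k then some x else none) ⁻¹' {j}})
          (fun x => if I x = n then some x else none)
        = entR ν (fun x => if I x = n then some x else none)
            - entR ν (fun x => I x = n) ∧
        c < condEntSig ν
          (MeasurableSpace.generateFrom
            {S : Set L | ∃ k : ℕ, k ≠ n ∧ ∃ j : Option L,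
              S = (fun x => if I x = k then some x else none) ⁻¹' {j}})
          (fun x => if I x = n then some x else none)) := by
  have hlog2 : (0:ℝ) ≤ Real.log 2 := Real.log_nonneg one_le_two
  haveI hL : Infinite L := by
    by_contra h
    haveI : Finite L := not_infinite_iff_finite.1 h
    haveI := Fintype.ofFinite L
    rw [tsum_fintype] at hinf
    exact (ENNReal.sum_lt_top.2 fun a _ => ENNReal.ofReal_lt_top).ne hinf
  obtain ⟨e⟩ : Nonempty (ℕ ≃ L) := by
    haveI := Encodable.ofCountable L
    haveI := Denumerable.ofEncodableOfInfinite L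
    exact ⟨(Denumerable.eqv L).symm⟩
  set g : L → ℝ := fun ℓ => negMulLog (ν {ℓ}).toReal with hg
  have hgnn : ∀ ℓ, 0 ≤ g ℓ := by
    intro ℓ
    refine Real.negMulLog_nonneg ENNReal.toReal_nonneg ?_
    have h1 : ν {ℓ} ≤ 1 := prob_le_one
    simpa using ENNReal.toReal_mono (by simp) h1
  have hns : ¬ Summable (fun k => g (e k)) := by
    intro hs
    have hs2 : Summable g := e.summable_iff.1 hs
    have h2 := ENNReal.ofReal_tsum_of_nonneg hgnn hs2
    rw [hinf] at h2
    exact ENNReal.ofReal_ne_top h2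
  have hb : (0:ℝ) ≤ c + Real.log 2 := by linarith
  obtain ⟨I, hfin, hsum⟩ := exists_I e g hgnn hns hb
  refine ⟨I, hfin, hsum, ?_⟩
  intro n
  have hνA : ν (I ⁻¹' {n}) ≠ 0 := by
    intro h0
    have hz : ∀ ℓ : (I ⁻¹' {n} : Set L), g (ℓ : L) = 0 := by
      rintro ⟨ℓ, hℓ⟩
      have : ν {ℓ} = 0 := measure_mono_null (Set.singleton_subset_iff.2 hℓ) h0
      simp [hg, this, Real.negMulLog_zero]
    have hzz : ∑' ℓ : (I ⁻¹' {n} : Set L), g (ℓ : L) = 0 := by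
      rw [tsum_congr hz]; exact tsum_zero
    have h2 := hsum n
    rw [hzz] at h2
    linarith
  obtain ⟨heq, hval⟩ := key ν I n (hfin n) hνA
  refine ⟨heq, ?_⟩
  rw [hval]
  have hS : ∑' ℓ : (I ⁻¹' {n} : Set L), negMulLog (ν {(ℓ:L)}).toReal
      = ∑ ℓ ∈ (hfin n).toFinset, negMulLog (ν {ℓ}).toReal := by
    calc ∑' ℓ : (I ⁻¹' {n} : Set L), negMulLog (ν {(ℓ:L)}).toReal
        = ∑' ℓ : (((hfin n).toFinset : Finset L) : Set L), negMulLog (ν {(ℓ:L)}).toReal :=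
          ((Equiv.setCongr ((hfin n).coe_toFinset)).tsum_eq
            (fun ℓ : (I ⁻¹' {n} : Set L) => negMulLog (ν {(ℓ:L)}).toReal)).symm
      _ = ∑ ℓ ∈ (hfin n).toFinset, negMulLog (ν {ℓ}).toReal :=
          Finset.tsum_subtype' (hfin n).toFinset (fun ℓ => negMulLog (ν {ℓ}).toReal)
  have hlog := negMulLog_le_log_two (x := (ν (I ⁻¹' {n})).toReal) ENNReal.toReal_nonneg
  have h2 := hsum n
  rw [hS] at h2
  linarith
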